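/- Under the stated continuity and boundedness assumptions, a market equilibrium exists: there is a triple (λ, N, K) ∈ [0, Λ] × [N₁, N₂] × [0, K̄] satisfying simultaneously λ = F_p(α·t_w(N − λ/μ) + p_f), N = F_d(w_g + (l − p_g)·K·r(λ, N, K)/N), and K = F_g(p_g·r(λ, N, K)). -/

import Mathlib

open Finset

private def e01 (a b : Fin 3) : ZMod 2 :=
  if (a = 0 ∧ b = 1) ∨ (a = 1 ∧ b = 0) then 1 else 0

private def cmp3 (a b c : Fin 3) : ZMod 2 :=
  if a ≠ b ∧ a ≠ c ∧ b ≠ c then 1 else 0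

private lemma cmp3_eq (a b c : Fin 3) : cmp3 a b c = e01 a b + e01 b c + e01 a c := by
  revert a b c; decide

private lemma cmp3_eq_zero {a b c : Fin 3} (h : a ≠ b → a ≠ c → b = c) : cmp3 a b c = 0 := by
  rw [cmp3, if_neg]
  rintro ⟨u, v, w⟩
  exact w (h u v)

private lemma z2aux (x y : ZMod 2) : (y + x) + y = x := by revert x y; decide

private lemma z2aux' (x y : ZMod 2) : (x + y) + y = x := by revert x y; decide

private lemma telescope (g : ℕ → ZMod 2) (n : ℕ) :
    ∑ i ∈ range n, (g (i + 1) + g i) = g n + g 0 := by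
  induction n with
  | zero =>
    rw [Finset.sum_range_zero]
    exact (CharTwo.add_self_eq_zero (g 0)).symm
  | succ n ih =>
    rw [Finset.sum_range_succ, ih]
    have : ∀ x y z : ZMod 2, (z + y) + (x + z) = x + y := by decide
    exact this _ _ _

/-- Sperner's lemma for the standard triangulation of the lattice triangle
`{(i,j) : i + j ≤ n}`. -/
theorem sperner_triangle (n : ℕ) (hn : 1 ≤ n) (ℓ : ℕ → ℕ → Fin 3)
    (h0 : ∀ j ≤ n, ℓ 0 j ≠ 0) (h1 : ∀ i ≤ n, ℓ i 0 ≠ 1)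
    (h2 : ∀ i j, i + j = n → ℓ i j ≠ 2) :
    ∃ i j, (i + j + 1 ≤ n ∧
        ℓ i j ≠ ℓ (i+1) j ∧ ℓ i j ≠ ℓ i (j+1) ∧ ℓ (i+1) j ≠ ℓ i (j+1)) ∨
      (i + j + 2 ≤ n ∧
        ℓ (i+1) j ≠ ℓ i (j+1) ∧ ℓ (i+1) j ≠ ℓ (i+1) (j+1) ∧
        ℓ i (j+1) ≠ ℓ (i+1) (j+1)) := by
  obtain ⟨m, rfl⟩ : ∃ m, n = m + 1 := ⟨n - 1, by omega⟩
  by_contra hcon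
  push_neg at hcon
  set Hh : ℕ → ℕ → ZMod 2 := fun i j => e01 (ℓ i j) (ℓ (i+1) j) with hHh
  set Vv : ℕ → ℕ → ZMod 2 := fun i j => e01 (ℓ i j) (ℓ i (j+1)) with hVv
  set Dd : ℕ → ℕ → ZMod 2 := fun i j => e01 (ℓ (i+1) j) (ℓ i (j+1)) with hDd
  -- the global sum vanishes since there is no rainbow triangle
  have hS : (∑ i ∈ range (m+1), ∑ j ∈ range (m + 1 - i),
        cmp3 (ℓ i j) (ℓ (i+1) j) (ℓ i (j+1)))
      + (∑ i ∈ range (m+1), ∑ j ∈ range (m - i),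
        cmp3 (ℓ (i+1) j) (ℓ i (j+1)) (ℓ (i+1) (j+1))) = 0 := by
    have t1 : (∑ i ∈ range (m+1), ∑ j ∈ range (m + 1 - i),
        cmp3 (ℓ i j) (ℓ (i+1) j) (ℓ i (j+1))) = 0 := by
      apply Finset.sum_eq_zero; intro i hi
      apply Finset.sum_eq_zero; intro j hj
      have hi' := Finset.mem_range.mp hi
      have hj' := Finset.mem_range.mp hj
      exact cmp3_eq_zero ((hcon i j).1 (by omega))
    have t2 : (∑ i ∈ range (m+1), ∑ j ∈ range (m - i),
        cmp3 (ℓ (i+1) j) (ℓ i (j+1)) (ℓ (i+1) (j+1))) = 0 := by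
      apply Finset.sum_eq_zero; intro i hi
      apply Finset.sum_eq_zero; intro j hj
      have hi' := Finset.mem_range.mp hi
      have hj' := Finset.mem_range.mp hj
      exact cmp3_eq_zero ((hcon i j).2 (by omega))
    rw [t1, t2, add_zero]
  -- rewrite the global sum as a boundary sum
  have key : (∑ i ∈ range (m+1), ∑ j ∈ range (m + 1 - i),
        cmp3 (ℓ i j) (ℓ (i+1) j) (ℓ i (j+1)))
      + (∑ i ∈ range (m+1), ∑ j ∈ range (m - i),
        cmp3 (ℓ (i+1) j) (ℓ i (j+1)) (ℓ (i+1) (j+1)))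
      = (∑ i ∈ range (m+1), Hh i 0) + (∑ j ∈ range (m+1), Vv 0 j)
        + (∑ i ∈ range (m+1), Dd i (m - i)) := by
    have e1 : ∀ i j, cmp3 (ℓ i j) (ℓ (i+1) j) (ℓ i (j+1)) = Hh i j + Dd i j + Vv i j := by
      intro i j; rw [cmp3_eq]
    have e2 : ∀ i j, cmp3 (ℓ (i+1) j) (ℓ i (j+1)) (ℓ (i+1) (j+1))
        = Dd i j + Hh i (j+1) + Vv (i+1) j := by
      intro i j; rw [cmp3_eq]
    simp only [e1, e2, Finset.sum_add_distrib]
    have hDpair : (∑ i ∈ range (m+1), ∑ j ∈ range (m + 1 - i), Dd i j)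
        + (∑ i ∈ range (m+1), ∑ j ∈ range (m - i), Dd i j)
        = ∑ i ∈ range (m+1), Dd i (m - i) := by
      rw [← Finset.sum_add_distrib]
      apply Finset.sum_congr rfl
      intro i hi
      have hi' : i < m + 1 := Finset.mem_range.mp hi
      have hni : m + 1 - i = (m - i) + 1 := by omega
      rw [hni, Finset.sum_range_succ]
      exact z2aux _ _
    have hHpair : (∑ i ∈ range (m+1), ∑ j ∈ range (m + 1 - i), Hh i j)
        + (∑ i ∈ range (m+1), ∑ j ∈ range (m - i), Hh i (j+1))
        = ∑ i ∈ range (m+1), Hh i 0 := by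
      rw [← Finset.sum_add_distrib]
      apply Finset.sum_congr rfl
      intro i hi
      have hi' : i < m + 1 := Finset.mem_range.mp hi
      have hni : m + 1 - i = (m - i) + 1 := by omega
      rw [hni, Finset.sum_range_succ']
      exact z2aux _ _
    have hVpair : (∑ i ∈ range (m+1), ∑ j ∈ range (m + 1 - i), Vv i j)
        + (∑ i ∈ range (m+1), ∑ j ∈ range (m - i), Vv (i+1) j)
        = ∑ j ∈ range (m+1), Vv 0 j := by
      rw [Finset.sum_range_succ' (fun i => ∑ j ∈ range (m + 1 - i), Vv i j) m,
        Finset.sum_range_succ (fun i => ∑ j ∈ range (m - i), Vv (i+1) j) m]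
      have hlast : ∑ j ∈ range (m - m), Vv (m+1) j = 0 := by
        rw [Nat.sub_self]; simp
      rw [hlast, add_zero]
      have hsame : ∀ i, m + 1 - (i + 1) = m - i := fun i => by omega
      simp only [hsame, Nat.sub_zero]
      exact z2aux _ _
    calc _ = ((∑ i ∈ range (m+1), ∑ j ∈ range (m + 1 - i), Hh i j)
          + (∑ i ∈ range (m+1), ∑ j ∈ range (m - i), Hh i (j+1)))
        + ((∑ i ∈ range (m+1), ∑ j ∈ range (m + 1 - i), Vv i j)
          + (∑ i ∈ range (m+1), ∑ j ∈ range (m - i), Vv (i+1) j))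
        + ((∑ i ∈ range (m+1), ∑ j ∈ range (m + 1 - i), Dd i j)
          + (∑ i ∈ range (m+1), ∑ j ∈ range (m - i), Dd i j)) := by ring
      _ = _ := by rw [hDpair, hHpair, hVpair]
  -- evaluate the boundary sums
  have hHzero : ∀ i ∈ range (m+1), Hh i 0 = 0 := by
    intro i hi
    have hi' := Finset.mem_range.mp hi
    have ha := h1 i (by omega)
    have hb := h1 (i+1) (by omega)
    have : ∀ a b : Fin 3, a ≠ 1 → b ≠ 1 → e01 a b = 0 := by decide
    exact this _ _ ha hb
  have hVzero : ∀ j ∈ range (m+1), Vv 0 j = 0 := by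
    intro j hj
    have hj' := Finset.mem_range.mp hj
    have ha := h0 j (by omega)
    have hb := h0 (j+1) (by omega)
    have : ∀ a b : Fin 3, a ≠ 0 → b ≠ 0 → e01 a b = 0 := by decide
    exact this _ _ ha hb
  have hDone : (∑ i ∈ range (m+1), Dd i (m - i)) = 1 := by
    set mm : Fin 3 → ZMod 2 := fun a => if a = 1 then 1 else 0 with hmm
    set g : ℕ → ZMod 2 := fun k => mm (ℓ k (m + 1 - k)) with hg
    have step : ∀ i ∈ range (m+1), Dd i (m - i) = g (i+1) + g i := by
      intro i hi
      have hi' := Finset.mem_range.mp hi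
      have ha := h2 (i+1) (m - i) (by omega)
      have hb := h2 i (m - i + 1) (by omega)
      have habm : ∀ a b : Fin 3, a ≠ 2 → b ≠ 2 → e01 a b = mm a + mm b := by
        rw [hmm]; decide
      have e1 : m - i = m + 1 - (i + 1) := by omega
      have e2 : m - i + 1 = m + 1 - i := by omega
      have gg1 : g (i+1) = mm (ℓ (i+1) (m - i)) := by
        simp only [hg]; rw [← e1]
      have gg2 : g i = mm (ℓ i (m - i + 1)) := by
        simp only [hg]; rw [← e2]
      show e01 (ℓ (i+1) (m - i)) (ℓ i (m - i + 1)) = _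
      rw [habm _ _ ha hb, gg1, gg2]
    rw [Finset.sum_congr rfl step, telescope]
    have hgn : g (m+1) = 0 := by
      have h' := h1 (m+1) (le_refl _)
      rw [hg]
      simp only [Nat.sub_self]
      have : ∀ a : Fin 3, a ≠ 1 → mm a = 0 := by rw [hmm]; decide
      exact this _ h'
    have hg0 : g 0 = 1 := by
      have h' := h0 (m+1) (le_refl _)
      have h'' := h2 0 (m+1) (by omega)
      rw [hg]
      simp only [Nat.sub_zero]
      have : ∀ a : Fin 3, a ≠ 0 → a ≠ 2 → mm a = 1 := by rw [hmm]; decide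
      exact this _ h' h''
    rw [hgn, hg0, zero_add]
  rw [key, Finset.sum_eq_zero hHzero, Finset.sum_eq_zero hVzero, hDone] at hS
  simp at hS

open Finset

section BrouwerTriangle

/-- The standard closed triangle in the plane. -/
private def Tri : Set (ℝ × ℝ) := {p | 0 ≤ p.1 ∧ 0 ≤ p.2 ∧ p.1 + p.2 ≤ 1}

private lemma isCompact_Tri : IsCompact Tri := by
  have hsub : Tri ⊆ Set.Icc (0:ℝ) 1 ×ˢ Set.Icc (0:ℝ) 1 := by
    rintro ⟨x, y⟩ ⟨h1, h2, h3⟩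
    exact ⟨⟨h1, by dsimp at *; linarith⟩, ⟨h2, by dsimp at *; linarith⟩⟩
  have hclosed : IsClosed Tri := by
    have : Tri = {p : ℝ × ℝ | 0 ≤ p.1} ∩ {p | 0 ≤ p.2} ∩ {p | p.1 + p.2 ≤ 1} := by
      ext p; simp [Tri]; tauto
    rw [this]
    exact ((isClosed_le continuous_const continuous_fst).inter
      (isClosed_le continuous_const continuous_snd)).inter
      (isClosed_le (continuous_fst.add continuous_snd) continuous_const)
  exact (isCompact_Icc.prod isCompact_Icc).of_isClosed_subset hclosed hsub

/-- barycentric coordinates -/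
private noncomputable def bc : Fin 3 → ℝ × ℝ → ℝ := fun m p =>
  if m = 0 then p.1 else if m = 1 then p.2 else 1 - p.1 - p.2

private lemma bc_continuous (m : Fin 3) : Continuous (bc m) := by
  fin_cases m <;> simp only [bc]
  · exact continuous_fst.congr (fun p => by simp [bc])
  · exact continuous_snd.congr (fun p => by simp [bc])
  · exact (((continuous_const : Continuous fun _ : ℝ × ℝ => (1:ℝ)).sub continuous_fst).sub continuous_snd).congr (fun p => by simp [bc])

private lemma bc_sum (p : ℝ × ℝ) : bc 0 p + bc 1 p + bc 2 p = 1 := by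
  simp [bc]

private lemma bc_nonneg {p : ℝ × ℝ} (hp : p ∈ Tri) (m : Fin 3) : 0 ≤ bc m p := by
  obtain ⟨h1, h2, h3⟩ := hp
  fin_cases m <;> simp [bc] <;> linarith

/-- Brouwer's fixed point theorem for the standard triangle. -/
theorem brouwer_tri (f : ℝ × ℝ → ℝ × ℝ) (hf : ContinuousOn f Tri)
    (hmap : Set.MapsTo f Tri Tri) : ∃ p ∈ Tri, f p = p := by
  -- the labeling rule
  have hlab : ∀ p, p ∈ Tri → ∃ m : Fin 3, 0 < bc m p ∧ bc m (f p) ≤ bc m p := by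
    intro p hp
    by_contra hno
    push_neg at hno
    have hq := hmap hp
    have a0 : bc 0 p ≤ bc 0 (f p) := by
      rcases eq_or_lt_of_le (bc_nonneg hp 0) with h | h
      · rw [← h]; exact bc_nonneg hq 0
      · exact le_of_lt (hno 0 h)
    have a1 : bc 1 p ≤ bc 1 (f p) := by
      rcases eq_or_lt_of_le (bc_nonneg hp 1) with h | h
      · rw [← h]; exact bc_nonneg hq 1
      · exact le_of_lt (hno 1 h)
    have a2 : bc 2 p ≤ bc 2 (f p) := by
      rcases eq_or_lt_of_le (bc_nonneg hp 2) with h | h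
      · rw [← h]; exact bc_nonneg hq 2
      · exact le_of_lt (hno 2 h)
    -- some coordinate is positive, giving a strict inequality
    have hpos : 0 < bc 0 p ∨ 0 < bc 1 p ∨ 0 < bc 2 p := by
      by_contra hc
      push_neg at hc
      have := bc_sum p
      obtain ⟨u, v, w⟩ := hc
      linarith
    have hsp := bc_sum p
    have hsq := bc_sum (f p)
    rcases hpos with h | h | h
    · have := hno 0 h; linarith
    · have := hno 1 h; linarith
    · have := hno 2 h; linarith
  choose! lab hlabpos hlable using hlab
  -- grid points
  have mem_pt : ∀ n : ℕ, 0 < n → ∀ i j : ℕ, i + j ≤ n →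
      ((i : ℝ) / n, (j : ℝ) / n) ∈ Tri := by
    intro n hn i j hij
    have hn' : (0:ℝ) < n := by exact_mod_cast hn
    have hij' : (i:ℝ) + (j:ℝ) ≤ (n:ℝ) := by exact_mod_cast hij
    refine ⟨by positivity, by positivity, ?_⟩
    rw [← add_div, div_le_one hn']
    exact hij'
  -- for each n, find a small triple with labels 0,1,2
  have main : ∀ n : ℕ, ∃ x y z : ℝ × ℝ, x ∈ Tri ∧ y ∈ Tri ∧ z ∈ Tri ∧
      dist x y ≤ 1 / (n+1) ∧ dist x z ≤ 1 / (n+1) ∧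
      bc 0 (f x) ≤ bc 0 x ∧ bc 1 (f y) ≤ bc 1 y ∧ bc 2 (f z) ≤ bc 2 z := by
    intro n
    set N := n + 1 with hN
    have hN0 : 0 < N := Nat.succ_pos n
    set ℓ : ℕ → ℕ → Fin 3 := fun i j =>
      if i + j ≤ N then lab ((i : ℝ) / N, (j : ℝ) / N) else 0 with hℓ
    have hin : ∀ i j, i + j ≤ N → ℓ i j = lab ((i : ℝ) / N, (j : ℝ) / N) := by
      intro i j h; simp [hℓ, h]
    have h0 : ∀ j ≤ N, ℓ 0 j ≠ 0 := by
      intro j hj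
      rw [hin 0 j (by omega)]
      intro hcon
      have hmem := mem_pt N hN0 0 j (by omega)
      have := hlabpos _ hmem
      rw [hcon] at this
      simp [bc] at this
    have h1 : ∀ i ≤ N, ℓ i 0 ≠ 1 := by
      intro i hi
      rw [hin i 0 (by omega)]
      intro hcon
      have hmem := mem_pt N hN0 i 0 (by omega)
      have := hlabpos _ hmem
      rw [hcon] at this
      simp [bc] at this
    have h2 : ∀ i j, i + j = N → ℓ i j ≠ 2 := by
      intro i j hij
      rw [hin i j (by omega)]
      intro hcon
      have hmem := mem_pt N hN0 i j (by omega)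
      have := hlabpos _ hmem
      rw [hcon] at this
      simp only [bc] at this
      have hlt : (0:ℝ) < 1 - i/N - j/N := this
      have hN' : (0:ℝ) < N := by exact_mod_cast hN0
      have hij' : (i:ℝ) + (j:ℝ) = (N:ℝ) := by exact_mod_cast hij
      have hone : (i:ℝ)/N + (j:ℝ)/N = 1 := by
        rw [← add_div, hij', div_self (ne_of_gt hN')]
      linarith
    obtain ⟨i, j, hcase⟩ := sperner_triangle N hN0 ℓ h0 h1 h2
    -- convert to points
    have key : ∃ v₁ v₂ v₃ : ℝ × ℝ, v₁ ∈ Tri ∧ v₂ ∈ Tri ∧ v₃ ∈ Tri ∧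
        dist v₁ v₂ ≤ 1/(N:ℝ) ∧ dist v₁ v₃ ≤ 1/(N:ℝ) ∧ dist v₂ v₃ ≤ 1/(N:ℝ) ∧
        lab v₁ ≠ lab v₂ ∧ lab v₁ ≠ lab v₃ ∧ lab v₂ ≠ lab v₃ := by
      have hdist : ∀ a b a' b' : ℝ, |a - a'| ≤ 1/(N:ℝ) → |b - b'| ≤ 1/(N:ℝ) →
          dist ((a, b) : ℝ × ℝ) (a', b') ≤ 1/(N:ℝ) := by
        intro a b a' b' hx hy
        rw [Prod.dist_eq]
        simp only [Real.dist_eq]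
        exact max_le hx hy
      have hNr : (0:ℝ) < N := by exact_mod_cast hN0
      have step : ∀ k : ℕ, ((k:ℝ)+1)/N - (k:ℝ)/N = 1/(N:ℝ) := by
        intro k; field_simp; ring
      rcases hcase with ⟨hle, d1, d2, d3⟩ | ⟨hle, d1, d2, d3⟩
      · refine ⟨((i:ℝ)/N, (j:ℝ)/N), (((i:ℝ)+1)/N, (j:ℝ)/N), ((i:ℝ)/N, ((j:ℝ)+1)/N),
          mem_pt N hN0 i j (by omega), ?_, ?_, ?_, ?_, ?_, ?_, ?_, ?_⟩
        · have := mem_pt N hN0 (i+1) j (by omega); push_cast at this ⊢; exact this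
        · have := mem_pt N hN0 i (j+1) (by omega); push_cast at this ⊢; exact this
        · apply hdist <;> rw [abs_sub_comm]
          · rw [abs_of_nonneg (by rw [step]; positivity)]
            rw [step]
          · simp [le_of_lt (by positivity : (0:ℝ) < 1/(N:ℝ))]
        · apply hdist
          · simp [le_of_lt (by positivity : (0:ℝ) < 1/(N:ℝ))]
          · rw [abs_sub_comm, abs_of_nonneg (by rw [step]; positivity), step]
        · apply hdist
          · rw [abs_of_nonneg (by rw [step]; positivity), step]
          · rw [abs_sub_comm, abs_of_nonneg (by rw [step]; positivity), step]
        · have h := d1; rw [hin i j (by omega), hin (i+1) j (by omega)] at h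
          push_cast [hN] at h ⊢; exact h
        · have h := d2; rw [hin i j (by omega), hin i (j+1) (by omega)] at h
          push_cast [hN] at h ⊢; exact h
        · have h := d3; rw [hin (i+1) j (by omega), hin i (j+1) (by omega)] at h
          push_cast [hN] at h ⊢; exact h
      · refine ⟨(((i:ℝ)+1)/N, (j:ℝ)/N), ((i:ℝ)/N, ((j:ℝ)+1)/N), (((i:ℝ)+1)/N, ((j:ℝ)+1)/N),
          ?_, ?_, ?_, ?_, ?_, ?_, ?_, ?_, ?_⟩
        · have := mem_pt N hN0 (i+1) j (by omega); push_cast at this ⊢; exact this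
        · have := mem_pt N hN0 i (j+1) (by omega); push_cast at this ⊢; exact this
        · have := mem_pt N hN0 (i+1) (j+1) (by omega); push_cast at this ⊢; exact this
        · apply hdist
          · rw [abs_of_nonneg (by rw [step]; positivity), step]
          · rw [abs_sub_comm, abs_of_nonneg (by rw [step]; positivity), step]
        · apply hdist
          · simp [le_of_lt (by positivity : (0:ℝ) < 1/(N:ℝ))]
          · rw [abs_sub_comm, abs_of_nonneg (by rw [step]; positivity), step]
        · apply hdist
          · rw [abs_sub_comm, abs_of_nonneg (by rw [step]; positivity), step]
          · simp [le_of_lt (by positivity : (0:ℝ) < 1/(N:ℝ))]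
        · have h := d1; rw [hin (i+1) j (by omega), hin i (j+1) (by omega)] at h
          push_cast [hN] at h ⊢; exact h
        · have h := d2; rw [hin (i+1) j (by omega), hin (i+1) (j+1) (by omega)] at h
          push_cast [hN] at h ⊢; exact h
        · have h := d3; rw [hin i (j+1) (by omega), hin (i+1) (j+1) (by omega)] at h
          push_cast [hN] at h ⊢; exact h
    obtain ⟨v₁, v₂, v₃, hv₁, hv₂, hv₃, d12, d13, d23, l12, l13, l23⟩ := key
    -- pick the vertex with each label
    have cover : ∀ m : Fin 3, ∃ v, v ∈ Tri ∧ lab v = m ∧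
        (v = v₁ ∨ v = v₂ ∨ v = v₃) := by
      intro m
      have : ∀ a b c : Fin 3, a ≠ b → a ≠ c → b ≠ c → ∀ m : Fin 3,
          m = a ∨ m = b ∨ m = c := by decide
      rcases this _ _ _ l12 l13 l23 m with h | h | h
      · exact ⟨v₁, hv₁, h.symm, Or.inl rfl⟩
      · exact ⟨v₂, hv₂, h.symm, Or.inr (Or.inl rfl)⟩
      · exact ⟨v₃, hv₃, h.symm, Or.inr (Or.inr rfl)⟩
    have d21 : dist v₂ v₁ ≤ 1/(N:ℝ) := by rw [dist_comm]; exact d12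
    have d31 : dist v₃ v₁ ≤ 1/(N:ℝ) := by rw [dist_comm]; exact d13
    have d32 : dist v₃ v₂ ≤ 1/(N:ℝ) := by rw [dist_comm]; exact d23
    have hNpos : (0:ℝ) ≤ 1/(N:ℝ) := by positivity
    obtain ⟨x, hx, hlx, hwx⟩ := cover 0
    obtain ⟨y, hy, hly, hwy⟩ := cover 1
    obtain ⟨z, hz, hlz, hwz⟩ := cover 2
    have hdxy : dist x y ≤ 1/(N:ℝ) := by
      rcases hwx with rfl | rfl | rfl <;> rcases hwy with rfl | rfl | rfl <;>
        first | assumption | (rw [dist_self]; exact hNpos)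
    have hdxz : dist x z ≤ 1/(N:ℝ) := by
      rcases hwx with rfl | rfl | rfl <;> rcases hwz with rfl | rfl | rfl <;>
        first | assumption | (rw [dist_self]; exact hNpos)
    refine ⟨x, y, z, hx, hy, hz, by exact_mod_cast hdxy, by exact_mod_cast hdxz, ?_, ?_, ?_⟩
    · have := hlable x hx; rw [hlx] at this; exact this
    · have := hlable y hy; rw [hly] at this; exact this
    · have := hlable z hz; rw [hlz] at this; exact this
  choose X Y Z hX hY hZ hdXY hdXZ hbX hbY hbZ using main
  -- compactness: extract converging subsequence
  obtain ⟨p, hp, φ, hφ, hconv⟩ := isCompact_Tri.tendsto_subseq hX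
  have hn0 : Filter.Tendsto (fun n : ℕ => 1 / ((n:ℝ)+1)) Filter.atTop (nhds 0) :=
    tendsto_one_div_add_atTop_nhds_zero_nat
  have hφ0 : Filter.Tendsto (fun n : ℕ => 1 / ((φ n : ℝ)+1)) Filter.atTop (nhds 0) :=
    hn0.comp hφ.tendsto_atTop
  have hdist0 : Filter.Tendsto (fun n => dist (X (φ n)) p) Filter.atTop (nhds 0) :=
    tendsto_iff_dist_tendsto_zero.mp hconv
  have squeeze : ∀ S : ℕ → ℝ × ℝ, (∀ n, dist (X n) (S n) ≤ 1 / ((n:ℝ)+1)) →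
      Filter.Tendsto (S ∘ φ) Filter.atTop (nhds p) := by
    intro S hS
    rw [tendsto_iff_dist_tendsto_zero]
    have hb : Filter.Tendsto (fun n => 1 / ((φ n : ℝ)+1) + dist (X (φ n)) p)
        Filter.atTop (nhds 0) := by
      have := hφ0.add hdist0
      simpa using this
    apply squeeze_zero (fun n => dist_nonneg) _ hb
    intro n
    calc dist (S (φ n)) p ≤ dist (S (φ n)) (X (φ n)) + dist (X (φ n)) p :=
          dist_triangle _ _ _
      _ ≤ 1 / ((φ n : ℝ)+1) + dist (X (φ n)) p := by
          rw [dist_comm]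
          exact add_le_add (hS (φ n)) le_rfl
  have hconvY : Filter.Tendsto (Y ∘ φ) Filter.atTop (nhds p) := squeeze Y hdXY
  have hconvZ : Filter.Tendsto (Z ∘ φ) Filter.atTop (nhds p) := squeeze Z hdXZ
  -- limit of the inequalities
  have flim : ∀ S : ℕ → ℝ × ℝ, (∀ n, S n ∈ Tri) →
      Filter.Tendsto (S ∘ φ) Filter.atTop (nhds p) →
      Filter.Tendsto (fun n => f (S (φ n))) Filter.atTop (nhds (f p)) := by
    intro S hmem hc
    exact ((hf p hp).tendsto).comp
      (tendsto_nhdsWithin_of_tendsto_nhds_of_eventually_within _ hc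
        (Filter.Eventually.of_forall fun n => hmem (φ n)))
  have lim_le : ∀ (m : Fin 3) (S : ℕ → ℝ × ℝ), (∀ n, S n ∈ Tri) →
      Filter.Tendsto (S ∘ φ) Filter.atTop (nhds p) →
      (∀ n, bc m (f (S n)) ≤ bc m (S n)) → bc m (f p) ≤ bc m p := by
    intro m S hmem hc hle
    exact le_of_tendsto_of_tendsto'
      (((bc_continuous m).tendsto (f p)).comp (flim S hmem hc))
      (((bc_continuous m).tendsto p).comp hc)
      (fun n => hle (φ n))
  have i0 : bc 0 (f p) ≤ bc 0 p := lim_le 0 X hX hconv hbX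
  have i1 : bc 1 (f p) ≤ bc 1 p := lim_le 1 Y hY hconvY hbY
  have i2 : bc 2 (f p) ≤ bc 2 p := lim_le 2 Z hZ hconvZ hbZ
  refine ⟨p, hp, ?_⟩
  have hs1 := bc_sum p
  have hs2 := bc_sum (f p)
  simp [bc] at i0 i1 i2 hs1 hs2
  have e1 : (f p).1 = p.1 := by linarith
  have e2 : (f p).2 = p.2 := by linarith
  exact Prod.ext e1 e2

end BrouwerTriangle

/-- Brouwer's fixed point theorem on a (possibly degenerate) closed rectangle. -/
theorem brouwer_rect (a b c d : ℝ) (hab : a ≤ b) (hcd : c ≤ d)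
    (f : ℝ × ℝ → ℝ × ℝ)
    (hf : ContinuousOn f (Set.Icc a b ×ˢ Set.Icc c d))
    (hmap : Set.MapsTo f (Set.Icc a b ×ˢ Set.Icc c d) (Set.Icc a b ×ˢ Set.Icc c d)) :
    ∃ p ∈ Set.Icc a b ×ˢ Set.Icc c d, f p = p := by
  set R : Set (ℝ × ℝ) := Set.Icc a b ×ˢ Set.Icc c d with hR
  set L : ℝ := (b - a) + (d - c) + 1 with hL
  have hL0 : 0 < L := by rw [hL]; linarith
  set φ : ℝ × ℝ → ℝ × ℝ := fun q => (a + L * q.1, c + L * q.2) with hφ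
  set ψ : ℝ × ℝ → ℝ × ℝ := fun q => ((q.1 - a)/L, (q.2 - c)/L) with hψ
  set cl : ℝ × ℝ → ℝ × ℝ := fun q => (max a (min b q.1), max c (min d q.2)) with hcl
  have hclmem : ∀ q, cl q ∈ R := by
    intro q
    exact ⟨⟨le_max_left _ _, max_le hab (min_le_left _ _)⟩,
      ⟨le_max_left _ _, max_le hcd (min_le_left _ _)⟩⟩
  have hclid : ∀ q ∈ R, cl q = q := by
    rintro ⟨x, y⟩ ⟨⟨h1, h2⟩, ⟨h3, h4⟩⟩
    simp only [hcl]
    rw [min_eq_right h2, max_eq_right h1, min_eq_right h4, max_eq_right h3]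
  have hclcont : Continuous cl :=
    (continuous_const.max (continuous_const.min continuous_fst)).prodMk
      (continuous_const.max (continuous_const.min continuous_snd))
  have hφcont : Continuous φ :=
    (continuous_const.add (continuous_const.mul continuous_fst)).prodMk
      (continuous_const.add (continuous_const.mul continuous_snd))
  have hψcont : Continuous ψ :=
    ((continuous_fst.sub continuous_const).div_const L).prodMk
      ((continuous_snd.sub continuous_const).div_const L)
  have hψTri : ∀ v ∈ R, ψ v ∈ Tri := by
    rintro ⟨x, y⟩ ⟨⟨h1, h2⟩, ⟨h3, h4⟩⟩
    refine ⟨div_nonneg (by linarith) hL0.le, div_nonneg (by linarith) hL0.le, ?_⟩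
    show (x - a)/L + (y - c)/L ≤ 1
    rw [← add_div, div_le_one hL0]
    linarith
  have hφψ : ∀ v, φ (ψ v) = v := by
    rintro ⟨x, y⟩
    simp only [hφ, hψ]
    have : L * ((x - a)/L) = x - a := by field_simp
    have h2 : L * ((y - c)/L) = y - c := by field_simp
    rw [this, h2]
    norm_num
  set g : ℝ × ℝ → ℝ × ℝ := fun q => ψ (f (cl (φ q))) with hg
  have hgcont : ContinuousOn g Tri := by
    apply hψcont.comp_continuousOn
    exact hf.comp (hclcont.comp hφcont).continuousOn (fun q _ => hclmem (φ q))
  have hgmap : Set.MapsTo g Tri Tri := fun q _ => hψTri _ (hmap (hclmem (φ q)))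
  obtain ⟨q, hq, hfix⟩ := brouwer_tri g hgcont hgmap
  have hx : f (cl (φ q)) = φ q := by
    have := congrArg φ hfix
    rwa [hφψ] at this
  have hxR : φ q ∈ R := by
    rw [← hx]; exact hmap (hclmem (φ q))
  rw [hclid (φ q) hxR] at hx
  exact ⟨φ q, hxR, hx⟩

/-- Existence of a market equilibrium: under continuity and boundedness assumptions on the
passenger demand `Fp`, driver supply `Fd`, parking supply `Fg`, waiting time `tw` and garage
utilization `r`, there is a triple `(lam, N, K) ∈ [0, Λ] × [N₁, N₂] × [0, K̄]` satisfying the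
three equilibrium equations simultaneously. -/
theorem market_equilibrium_exists
    (pf wg pg l α μ Λ N₁ N₂ Kbar : ℝ)
    (hα : 0 < α) (hμ : 0 < μ) (hΛ : 0 < Λ)
    (hN₁ : 0 < N₁) (hN₁₂ : N₁ ≤ N₂) (hNΛ : Λ / μ < N₁) (hKbar : 0 ≤ Kbar)
    (Fp Fd Fg : ℝ → ℝ) (tw : ℝ → ℝ) (r : ℝ → ℝ → ℝ → ℝ)
    (hFp : Continuous Fp) (hFpRange : ∀ x, Fp x ∈ Set.Icc 0 Λ)
    (hFd : Continuous Fd) (hFdRange : ∀ x, Fd x ∈ Set.Icc N₁ N₂)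
    (hFg : Continuous Fg) (hFgRange : ∀ x, Fg x ∈ Set.Icc 0 Kbar)
    (htw : ContinuousOn tw (Set.Ioi 0))
    (hr : Continuous fun p : ℝ × ℝ × ℝ => r p.1 p.2.1 p.2.2) :
    ∃ lam N K : ℝ,
      lam ∈ Set.Icc 0 Λ ∧ N ∈ Set.Icc N₁ N₂ ∧ K ∈ Set.Icc 0 Kbar ∧
      lam = Fp (α * tw (N - lam / μ) + pf) ∧
      N = Fd (wg + (l - pg) * K * r lam N K / N) ∧
      K = Fg (pg * r lam N K) := by
  have hΛμ : 0 < Λ / μ := div_pos hΛ hμ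
  set s₁ : ℝ := N₁ - Λ / μ with hs₁def
  have hs₁ : 0 < s₁ := by rw [hs₁def]; linarith
  have hs₁₂ : s₁ ≤ N₂ := by rw [hs₁def]; linarith
  set A : ℝ → ℝ := fun s => Fp (α * tw s + pf) with hAdef
  set R : Set (ℝ × ℝ) := Set.Icc s₁ N₂ ×ˢ Set.Icc 0 Kbar with hRdef
  have hIoi : Set.Icc s₁ N₂ ⊆ Set.Ioi (0:ℝ) := fun s hs => lt_of_lt_of_le hs₁ hs.1
  have hA : ContinuousOn A (Set.Icc s₁ N₂) :=
    hFp.comp_continuousOn ((continuousOn_const.mul (htw.mono hIoi)).add continuousOn_const)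
  have hfstmem : ∀ q : ℝ × ℝ, q ∈ R → q.1 ∈ Set.Icc s₁ N₂ := fun q hq => hq.1
  have hAq : ContinuousOn (fun q : ℝ × ℝ => A q.1) R :=
    hA.comp continuous_fst.continuousOn hfstmem
  have hNq : ContinuousOn (fun q : ℝ × ℝ => q.1 + A q.1 / μ) R :=
    continuous_fst.continuousOn.add (hAq.div_const μ)
  have hNpos : ∀ q ∈ R, 0 < q.1 + A q.1 / μ := by
    intro q hq
    have h1 : s₁ ≤ q.1 := hq.1.1
    have h2 : 0 ≤ A q.1 := (hFpRange _).1
    have h3 : 0 ≤ A q.1 / μ := div_nonneg h2 hμ.le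
    linarith
  have hrq : ContinuousOn (fun q : ℝ × ℝ => r (A q.1) (q.1 + A q.1 / μ) q.2) R :=
    hr.comp_continuousOn (hAq.prodMk (hNq.prodMk continuous_snd.continuousOn))
  set u : ℝ × ℝ → ℝ := fun q =>
    wg + (l - pg) * q.2 * r (A q.1) (q.1 + A q.1 / μ) q.2 / (q.1 + A q.1 / μ) with hudef
  have hu : ContinuousOn u R :=
    continuousOn_const.add
      (((continuousOn_const.mul continuous_snd.continuousOn).mul hrq).div hNq
        (fun q hq => (hNpos q hq).ne'))
  set G : ℝ × ℝ → ℝ × ℝ := fun q =>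
    (Fd (u q) - A q.1 / μ, Fg (pg * r (A q.1) (q.1 + A q.1 / μ) q.2)) with hGdef
  have hGcont : ContinuousOn G R :=
    ((hFd.comp_continuousOn hu).sub (hAq.div_const μ)).prodMk
      (hFg.comp_continuousOn (continuousOn_const.mul hrq))
  have hGmap : Set.MapsTo G R R := by
    intro q hq
    have h1 := hFdRange (u q)
    have h2 := hFpRange (α * tw q.1 + pf)
    have h3 : 0 ≤ A q.1 / μ := div_nonneg h2.1 hμ.le
    have h4 : A q.1 / μ ≤ Λ / μ := (div_le_div_iff_of_pos_right hμ).mpr h2.2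
    refine ⟨⟨?_, ?_⟩, hFgRange _⟩
    · show s₁ ≤ Fd (u q) - A q.1 / μ
      rw [hs₁def]
      have := h1.1
      linarith
    · show Fd (u q) - A q.1 / μ ≤ N₂
      have := h1.2
      linarith
  obtain ⟨q, hqR, hfix⟩ := brouwer_rect s₁ N₂ 0 Kbar hs₁₂ hKbar G hGcont hGmap
  obtain ⟨s, K⟩ := q
  have h1 : Fd (u (s, K)) - A s / μ = s := congrArg Prod.fst hfix
  have h2 : Fg (pg * r (A s) (s + A s / μ) K) = K := congrArg Prod.snd hfix
  have hN : s + A s / μ = Fd (u (s, K)) := by linarith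
  refine ⟨A s, s + A s / μ, K, hFpRange _, ?_, ?_, ?_, ?_, ?_⟩
  · rw [hN]; exact hFdRange _
  · rw [← h2]; exact hFgRange _
  · have hs : s + A s / μ - A s / μ = s := by ring
    rw [hs]
  · exact hN
  · exact h2.symm
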